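/- Let P be a poset on [n] and 𝔽_q a finite field. If the equivalence relation E_C on I(P), defined by (I,J) ∈ E_C iff |I| = |J|, is a MacWilliams-type equivalence relation (for all linear P-codes C₁, C₂ ⊆ 𝔽_q^n, A_{Ī,E_C}(C₁) = A_{Ī,E_C}(C₂) for all order ideals I implies A_{J̄^c,E_C*}(C₁^⊥) = A_{J̄^c,E_C*}(C₂^⊥) for all order ideals J), then P is a hierarchical poset. (Theorem 4.1(ii), (b) ⇒ (a).) -/

import Mathlib

open scoped BigOperators
open Finset

noncomputable section
open scoped Classical

/-- `I ⊆ [n]` is an order ideal with respect to the order relation `le`. -/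
def IsIdeal {n : ℕ} (le : Fin n → Fin n → Prop) (I : Finset (Fin n)) : Prop :=
  ∀ a ∈ I, ∀ b, le b a → b ∈ I

/-- `⟨X⟩_P` : the smallest order ideal (w.r.t. `le`) containing `X`. -/
def idealCl {n : ℕ} (le : Fin n → Fin n → Prop) (X : Finset (Fin n)) : Finset (Fin n) :=
  Finset.univ.filter fun b => ∃ a ∈ X, le b a

/-- `M(A)` : the set of maximal elements of `A` with respect to `le`. -/
def maxSet {n : ℕ} (le : Fin n → Fin n → Prop) (A : Finset (Fin n)) : Finset (Fin n) :=
  A.filter fun a => ∀ b ∈ A, le a b → b = a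

/-- `E` is an equivalence relation on the set of order ideals of the poset `le`. -/
def EqvOnIdeals {n : ℕ} (le : Fin n → Fin n → Prop)
    (E : Finset (Fin n) → Finset (Fin n) → Prop) : Prop :=
  (∀ I J, E I J → IsIdeal le I ∧ IsIdeal le J) ∧
  (∀ I, IsIdeal le I → E I I) ∧
  (∀ I J, E I J → E J I) ∧
  (∀ I J K, E I J → E J K → E I K)

/-- support of a vector -/
def supp {n : ℕ} {F : Type} [Field F] [Fintype F] (v : Fin n → F) : Finset (Fin n) :=
  Finset.univ.filter fun i => v i ≠ 0

/-- standard dot product -/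
def dot {n : ℕ} {F : Type} [Field F] [Fintype F] (u v : Fin n → F) : F := ∑ i, u i * v i

/-- the sphere `S_I = {v : ⟨supp v⟩_P = I}` -/
def sph {n : ℕ} (F : Type) [Field F] [Fintype F] (le : Fin n → Fin n → Prop)
    (I : Finset (Fin n)) : Finset (Fin n → F) :=
  Finset.univ.filter fun v => idealCl le (supp v) = I

/-- the dual sphere `S_{J^c} = {v : ⟨supp v⟩_{P*} = J^c}` -/
def sphD {n : ℕ} (F : Type) [Field F] [Fintype F] (le : Fin n → Fin n → Prop)
    (J : Finset (Fin n)) : Finset (Fin n → F) :=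
  Finset.univ.filter fun v => idealCl (fun a b => le b a) (supp v) = Jᶜ

/-- the `E`-sphere `S_{Ī,E} = {v : (⟨supp v⟩_P, I) ∈ E}` -/
def sphE {n : ℕ} (F : Type) [Field F] [Fintype F] (le : Fin n → Fin n → Prop)
    (E : Finset (Fin n) → Finset (Fin n) → Prop) (I : Finset (Fin n)) :
    Finset (Fin n → F) :=
  Finset.univ.filter fun v => E (idealCl le (supp v)) I

/-- the `E*`-sphere `S_{J̄^c,E*} = {v : ⟨supp v⟩_{P*} = K^c for some ideal K with (K,J) ∈ E}` -/
def sphED {n : ℕ} (F : Type) [Field F] [Fintype F] (le : Fin n → Fin n → Prop)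
    (E : Finset (Fin n) → Finset (Fin n) → Prop) (J : Finset (Fin n)) :
    Finset (Fin n → F) :=
  Finset.univ.filter fun v =>
    ∃ K, IsIdeal le K ∧ E K J ∧ idealCl (fun a b => le b a) (supp v) = Kᶜ

/-- the dual code `C^⊥` -/
def dualCode {n : ℕ} {F : Type} [Field F] [Fintype F] (C : Submodule F (Fin n → F)) :
    Submodule F (Fin n → F) where
  carrier := {u | ∀ v ∈ C, dot u v = 0}
  zero_mem' := by intro v hv; simp [dot]
  add_mem' := by
    intro a b ha hb v hv
    have h1 := ha v hv
    have h2 := hb v hv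
    simp only [dot, Pi.add_apply] at *
    simp [add_mul, Finset.sum_add_distrib, h1, h2]
  smul_mem' := by
    intro c a ha v hv
    have h1 := ha v hv
    simp only [dot, Pi.smul_apply, smul_eq_mul] at *
    simp [mul_assoc, ← Finset.mul_sum, h1]

/-- `A_{Ī,E}(C) = |C ∩ S_{Ī,E}|` -/
def AE {n : ℕ} {F : Type} [Field F] [Fintype F] (le : Fin n → Fin n → Prop)
    (E : Finset (Fin n) → Finset (Fin n) → Prop)
    (C : Submodule F (Fin n → F)) (I : Finset (Fin n)) : ℕ :=
  ((sphE F le E I).filter fun v => v ∈ C).card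

/-- `A_{J̄^c,E*}(D) = |D ∩ S_{J̄^c,E*}|` -/
def AED {n : ℕ} {F : Type} [Field F] [Fintype F] (le : Fin n → Fin n → Prop)
    (E : Finset (Fin n) → Finset (Fin n) → Prop)
    (D : Submodule F (Fin n → F)) (J : Finset (Fin n)) : ℕ :=
  ((sphED F le E J).filter fun v => v ∈ D).card

/-- `E` is a MacWilliams-type equivalence relation (w.r.t. the field `F`). -/
def IsMacWilliamsType {n : ℕ} (F : Type) [Field F] [Fintype F]
    (le : Fin n → Fin n → Prop) (E : Finset (Fin n) → Finset (Fin n) → Prop) : Prop :=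
  ∀ C₁ C₂ : Submodule F (Fin n → F),
    (∀ I, IsIdeal le I → AE le E C₁ I = AE le E C₂ I) →
    ∀ J, IsIdeal le J → AED le E (dualCode C₁) J = AED le E (dualCode C₂) J

/-- a hierarchical poset (ordinal sum of antichains) -/
def IsHierarchical {n : ℕ} (le : Fin n → Fin n → Prop) : Prop :=
  ∃ l : Fin n → ℕ, ∀ i j, (le i j ∧ i ≠ j) ↔ l i < l j

/-- `σ` is an automorphism of the poset `le`. -/
def IsAut {n : ℕ} (le : Fin n → Fin n → Prop) (σ : Equiv.Perm (Fin n)) : Prop :=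
  ∀ x y, le x y ↔ le (σ x) (σ y)

/-- `A` and `B` are order-isomorphic with the induced orders. -/
def OrdIso {n : ℕ} (le : Fin n → Fin n → Prop) (A B : Finset (Fin n)) : Prop :=
  ∃ e : {x // x ∈ A} ≃ {x // x ∈ B}, ∀ a b : {x // x ∈ A}, le ↑a ↑b ↔ le ↑(e a) ↑(e b)


namespace MWaux

variable {n : ℕ}

set_option linter.unusedSectionVars false

section Levels

variable (le : Fin n → Fin n → Prop)

/-- strict order -/
def plt (a b : Fin n) : Prop := le a b ∧ a ≠ b

/-- cumulative level sets -/
def Alev : ℕ → Finset (Fin n)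
  | 0 => ∅
  | r + 1 => Alev r ∪ Finset.univ.filter fun i => ∀ x, plt le x i → x ∈ Alev r

lemma mem_Alev_succ {i : Fin n} {r : ℕ} :
    i ∈ Alev le (r + 1) ↔ i ∈ Alev le r ∨ ∀ x, plt le x i → x ∈ Alev le r := by
  simp [Alev]

lemma Alev_succ_subset (r : ℕ) : Alev le r ⊆ Alev le (r + 1) := by
  intro x hx; rw [mem_Alev_succ]; exact Or.inl hx

lemma Alev_mono {r r' : ℕ} (h : r ≤ r') : Alev le r ⊆ Alev le r' := by
  obtain ⟨d, rfl⟩ := Nat.exists_eq_add_of_le h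
  induction d with
  | zero => exact subset_rfl
  | succ d ih => exact (ih (Nat.le_add_right r d)).trans (Alev_succ_subset le (r + d))

lemma Alev_isIdeal (r : ℕ) [IsPartialOrder (Fin n) le] : IsIdeal le (Alev le r) := by
  induction r with
  | zero => intro a ha; simp [Alev] at ha
  | succ r ih =>
    intro a ha b hba
    rw [mem_Alev_succ] at ha
    rcases ha with ha | ha
    · exact Alev_succ_subset le r (ih a ha b hba)
    · by_cases hb : b = a
      · subst hb
        rw [mem_Alev_succ]; exact Or.inr ha
      · exact Alev_succ_subset le r (ha b ⟨hba, hb⟩)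

variable [IsPartialOrder (Fin n) le]

lemma mem_idealCl_singleton {b i : Fin n} : b ∈ idealCl le {i} ↔ le b i := by
  simp [idealCl]

lemma self_mem_idealCl_singleton (i : Fin n) : i ∈ idealCl le {i} :=
  (mem_idealCl_singleton le).2 (refl_of le i)

lemma cl_lt_subset {x i : Fin n} (h : plt le x i) :
    idealCl le {x} ⊆ (idealCl le {i}).erase i := by
  intro b hb
  rw [mem_idealCl_singleton] at hb
  refine Finset.mem_erase.2 ⟨?_, (mem_idealCl_singleton le).2 (IsTrans.trans _ _ _ hb h.1)⟩
  rintro rfl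
  exact h.2 (antisymm_of le h.1 hb)

lemma card_cl_lt {x i : Fin n} (h : plt le x i) :
    (idealCl le {x}).card < (idealCl le {i}).card := by
  calc (idealCl le {x}).card ≤ ((idealCl le {i}).erase i).card :=
        Finset.card_le_card (cl_lt_subset le h)
    _ < (idealCl le {i}).card :=
        Finset.card_erase_lt_of_mem (self_mem_idealCl_singleton le i)

lemma mem_Alev_of_card (c : ℕ) : ∀ i : Fin n, (idealCl le {i}).card ≤ c → i ∈ Alev le c := by
  induction c with
  | zero =>
    intro i hi
    exact absurd hi (by
      simp only [not_le]
      exact Finset.card_pos.2 ⟨i, self_mem_idealCl_singleton le i⟩)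
  | succ c ih =>
    intro i hi
    rw [mem_Alev_succ]
    refine Or.inr fun x hx => ih x ?_
    have := card_cl_lt le hx
    omega

lemma lev_ex (i : Fin n) : ∃ r, i ∈ Alev le (r + 1) :=
  ⟨(idealCl le {i}).card, Alev_succ_subset le _ (mem_Alev_of_card le _ i le_rfl)⟩

/-- level of an element -/
noncomputable def lev (i : Fin n) : ℕ := Nat.find (lev_ex le i)

lemma lev_spec (i : Fin n) : i ∈ Alev le (lev le i + 1) := Nat.find_spec (lev_ex le i)

lemma lev_lt_of_mem {i : Fin n} {r : ℕ} (h : i ∈ Alev le r) : lev le i < r := by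
  cases r with
  | zero => simp [Alev] at h
  | succ r => exact Nat.lt_succ_of_le (Nat.find_le h)

lemma mem_Alev_iff {i : Fin n} {r : ℕ} : i ∈ Alev le r ↔ lev le i < r := by
  refine ⟨lev_lt_of_mem le, fun h => ?_⟩
  exact Alev_mono le h (lev_spec le i)

lemma not_mem_Alev_lev (i : Fin n) : i ∉ Alev le (lev le i) := by
  rw [mem_Alev_iff]; omega

lemma strict_mem_Alev {x i : Fin n} (h : plt le x i) : x ∈ Alev le (lev le i) := by
  have hs := lev_spec le i
  rw [mem_Alev_succ] at hs
  rcases hs with hs | hs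
  · exact absurd hs (not_mem_Alev_lev le i)
  · exact hs x h

lemma lev_strict_lt {x i : Fin n} (h : plt le x i) : lev le x < lev le i :=
  lev_lt_of_mem le (strict_mem_Alev le h)

lemma descend {i : Fin n} (h : 1 ≤ lev le i) :
    ∃ x, plt le x i ∧ lev le x = lev le i - 1 := by
  by_contra hc
  push_neg at hc
  have hstep : ∀ x, plt le x i → x ∈ Alev le (lev le i - 1) := by
    intro x hx
    have h1 := lev_strict_lt le hx
    have h2 := hc x hx
    rw [mem_Alev_iff]; omega
  have : i ∈ Alev le (lev le i) := by
    have : i ∈ Alev le ((lev le i - 1) + 1) := (mem_Alev_succ le).2 (Or.inr hstep)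
    rwa [Nat.sub_add_cancel h] at this
  exact not_mem_Alev_lev le i this

/-- a failure of layering at level m -/
def Bad (m : ℕ) : Prop :=
  ∃ p z, lev le p = m + 1 ∧ lev le z = m ∧ ¬ plt le z p

lemma plt_trans {a b c : Fin n} (h1 : plt le a b) (h2 : plt le b c) : plt le a c := by
  refine ⟨IsTrans.trans _ _ _ h1.1 h2.1, ?_⟩
  rintro rfl
  exact h2.2 (antisymm_of le h2.1 h1.1)

lemma chain {m : ℕ} (hgood : ∀ r < m, ¬ Bad le r) :
    ∀ c ≤ m, ∀ j i : Fin n, lev le j = c → lev le i < c → plt le i j := by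
  intro c
  induction c using Nat.strong_induction_on with
  | _ c IH =>
    intro hcm j i hj hi
    have hc1 : 1 ≤ c := by omega
    obtain ⟨x, hxj, hx⟩ := descend le (i := j) (by omega : 1 ≤ lev le j)
    rw [hj] at hx
    rcases eq_or_lt_of_le (by omega : lev le i ≤ c - 1) with he | hlt
    · by_contra hnp
      exact hgood (c - 1) (by omega) ⟨j, i, by omega, by omega, hnp⟩
    · have h1 : plt le i x := IH (c - 1) (by omega) (by omega) x i (by omega) (by omega)
      exact plt_trans le h1 hxj

lemma hier_of_no_bad (hgood : ∀ r, ¬ Bad le r) : IsHierarchical le := by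
  refine ⟨lev le, fun i j => ⟨fun h => lev_strict_lt le h, fun h => ?_⟩⟩
  exact chain le (fun r _ => hgood r) (lev le j) le_rfl j i rfl h

lemma not_hier_bad (hnh : ¬ IsHierarchical le) : ∃ m, Bad le m := by
  by_contra h
  push_neg at h
  exact hnh (hier_of_no_bad le h)

end Levels

end MWaux
namespace MWaux

set_option linter.unusedSectionVars false

section Struct

variable {n : ℕ} (le : Fin n → Fin n → Prop) [IsPartialOrder (Fin n) le] (k : ℕ)

/-- the level-k elements -/
noncomputable def Gk : Finset (Fin n) := Finset.univ.filter fun y => lev le y = k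

lemma mem_Gk {y : Fin n} : y ∈ Gk le k ↔ lev le y = k := by simp [Gk]

lemma key13 (hmin : ∀ r < k, ¬ Bad le r) {y : Fin n} (hy : lev le y = k) {x : Fin n} :
    plt le x y ↔ x ∈ Alev le k := by
  constructor
  · intro h
    rw [mem_Alev_iff]
    have := lev_strict_lt le h
    omega
  · intro h
    rw [mem_Alev_iff le] at h
    exact chain le hmin k le_rfl y x hy (by omega)

lemma Dlem : ∀ y : Fin n, k ≤ lev le y → ∃ g, lev le g = k ∧ le g y := by
  have H : ∀ c, ∀ y : Fin n, lev le y = c → k ≤ c → ∃ g, lev le g = k ∧ le g y := by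
    intro c
    induction c using Nat.strong_induction_on with
    | _ c IH =>
      intro y hy hk
      rcases eq_or_lt_of_le hk with he | hlt
      · exact ⟨y, by omega, refl_of le y⟩
      · obtain ⟨x, hxy, hx⟩ := descend le (i := y) (by omega)
        obtain ⟨g, hg, hgx⟩ := IH (c - 1) (by omega) x (by omega) (by omega)
        exact ⟨g, hg, IsTrans.trans _ _ _ hgx hxy.1⟩
  exact fun y hy => H (lev le y) y rfl hy

lemma unique_ideal (hmin : ∀ r < k, ¬ Bad le r) {K : Finset (Fin n)}
    (hK : IsIdeal le K) (hcard : K.card = (Alev le k).card) : K = Alev le k := by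
  by_cases hsub : K ⊆ Alev le k
  · exact Finset.eq_of_subset_of_card_le hsub (le_of_eq hcard.symm)
  · exfalso
    obtain ⟨y, hyK, hyJ⟩ := Finset.not_subset.1 hsub
    have hylev : k ≤ lev le y := by
      rw [mem_Alev_iff le] at hyJ; omega
    obtain ⟨g, hg, hgy⟩ := Dlem le k y hylev
    have hgK : g ∈ K := hK y hyK g hgy
    have hgJ : g ∉ Alev le k := by rw [mem_Alev_iff le]; omega
    have hJK : Alev le k ⊆ K := by
      intro x hx
      exact hK g hgK x ((key13 le k hmin hg).2 hx).1
    have : Alev le k ⊂ K := ⟨hJK, fun h => hgJ (h hgK)⟩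
    have := Finset.card_lt_card this
    omega

lemma upcl_mem {S : Finset (Fin n)} {b : Fin n} :
    b ∈ idealCl (fun a b => le b a) S ↔ ∃ a ∈ S, le a b := by
  simp [idealCl]

lemma F6 (hmin : ∀ r < k, ¬ Bad le r) (S : Finset (Fin n)) :
    idealCl (fun a b => le b a) S = (Alev le k)ᶜ ↔
      (Gk le k ⊆ S ∧ S ⊆ (Alev le k)ᶜ) := by
  have hcmem : ∀ x : Fin n, x ∈ (Alev le k)ᶜ ↔ k ≤ lev le x := by
    intro x
    rw [Finset.mem_compl, mem_Alev_iff le]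
    omega
  constructor
  · intro h
    have hS : S ⊆ (Alev le k)ᶜ := by
      intro a ha
      rw [← h]
      exact (upcl_mem le).2 ⟨a, ha, refl_of le a⟩
    refine ⟨?_, hS⟩
    intro g hg
    rw [mem_Gk] at hg
    have : g ∈ (Alev le k)ᶜ := (hcmem g).2 (le_of_eq hg.symm)
    rw [← h, upcl_mem] at this
    obtain ⟨a, haS, hag⟩ := this
    have hak : k ≤ lev le a := (hcmem a).1 (hS haS)
    by_cases hae : a = g
    · rwa [← hae]
    · have := lev_strict_lt le (x := a) (i := g) ⟨hag, hae⟩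
      omega
  · rintro ⟨hG, hS⟩
    ext b
    rw [upcl_mem, hcmem]
    constructor
    · rintro ⟨a, haS, hab⟩
      have hak : k ≤ lev le a := (hcmem a).1 (hS haS)
      by_cases hae : a = b
      · subst hae; omega
      · have := lev_strict_lt le (x := a) (i := b) ⟨hab, hae⟩
        omega
    · intro hb
      obtain ⟨g, hg, hgb⟩ := Dlem le k b hb
      exact ⟨g, hG ((mem_Gk le k).2 hg), hgb⟩

end Struct

end MWaux
namespace MWaux

set_option linter.unusedSectionVars false
set_option maxHeartbeats 800000

section Counting

variable {n : ℕ} {F : Type} [Field F] [Fintype F]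

lemma mem_supp {v : Fin n → F} {t : Fin n} : t ∈ supp v ↔ v t ≠ 0 := by simp [supp]

lemma smul_apply' (c : F) (w : Fin n → F) (t : Fin n) : (c • w) t = c * w t := rfl

lemma supp_smul {c : F} (hc : c ≠ 0) (w : Fin n → F) : supp (c • w) = supp w := by
  ext t
  simp [mem_supp, smul_apply', hc]

lemma supp_zero : supp (0 : Fin n → F) = ∅ := by
  ext t; simp [mem_supp]

lemma idealCl_empty (le : Fin n → Fin n → Prop) : idealCl le (∅ : Finset (Fin n)) = ∅ := by
  ext b; simp [idealCl]

lemma dot_smul_right (u w : Fin n → F) (a : F) : dot u (a • w) = a * dot u w := by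
  simp only [dot, smul_apply', Finset.mul_sum]
  exact Finset.sum_congr rfl fun t _ => by ring

lemma mem_dualCode {C : Submodule F (Fin n → F)} {u : Fin n → F} :
    u ∈ dualCode C ↔ ∀ v ∈ C, dot u v = 0 := Iff.rfl

lemma mem_dual_span {w u : Fin n → F} :
    u ∈ dualCode (Submodule.span F {w}) ↔ dot u w = 0 := by
  rw [mem_dualCode]
  constructor
  · intro h
    exact h w (Submodule.mem_span_singleton_self w)
  · intro h v hv
    obtain ⟨a, rfl⟩ := Submodule.mem_span_singleton.1 hv
    rw [dot_smul_right, h, mul_zero]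

lemma card_erase_zero : (Finset.univ.erase (0 : F)).card = Fintype.card F - 1 := by
  rw [Finset.card_erase_of_mem (Finset.mem_univ _), Finset.card_univ]

/-- counting for the `e_i` hyperplane -/
lemma countA (B C : Finset (Fin n)) (i : Fin n) (hiB : i ∉ B) (hiC : i ∈ C) (hBC : B ⊆ C) :
    (Finset.univ.filter fun u : Fin n → F =>
        (∀ t ∈ B, u t ≠ 0) ∧ (∀ t, t ∉ C → u t = 0) ∧ u i = 0).card
      = (Fintype.card F - 1) ^ B.card * (Fintype.card F) ^ (((C \ B).erase i).card) := by
  classical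
  set q := Fintype.card F
  set W : Finset (Fin n) := (C \ B).erase i with hW
  have hf : (Finset.univ.filter fun u : Fin n → F =>
        (∀ t ∈ B, u t ≠ 0) ∧ (∀ t, t ∉ C → u t = 0) ∧ u i = 0)
      = Fintype.piFinset (fun t => if t = i then {0} else if t ∈ B then Finset.univ.erase 0
          else if t ∈ C then Finset.univ else ({0} : Finset F)) := by
    ext u
    simp only [Finset.mem_filter, Finset.mem_univ, true_and, Fintype.mem_piFinset]
    constructor
    · rintro ⟨h1, h2, h3⟩ t
      by_cases ht : t = i
      · subst ht; simp [h3]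
      · rw [if_neg ht]
        by_cases htB : t ∈ B
        · simp [htB, h1 t htB]
        · rw [if_neg htB]
          by_cases htC : t ∈ C
          · simp [htC]
          · simp [htC, h2 t htC]
    · intro h
      refine ⟨fun t htB => ?_, fun t htC => ?_, ?_⟩
      · have := h t
        rw [if_neg (show t ≠ i by rintro rfl; exact hiB htB), if_pos htB] at this
        exact (Finset.mem_erase.1 this).1
      · have := h t
        rw [if_neg (show t ≠ i by rintro rfl; exact htC hiC), if_neg (fun htB => htC (hBC htB)),
          if_neg htC, Finset.mem_singleton] at this
        exact this
      · have := h i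
        rw [if_pos rfl, Finset.mem_singleton] at this
        exact this
  rw [hf, Fintype.card_piFinset]
  have hpt : ∀ t : Fin n,
      ((if t = i then {0} else if t ∈ B then Finset.univ.erase 0
          else if t ∈ C then Finset.univ else ({0} : Finset F)).card)
        = (if t ∈ B then q - 1 else 1) * (if t ∈ W then q else 1) := by
    intro t
    by_cases ht : t = i
    · subst ht
      simp [hiB, hW]
    · rw [if_neg ht]
      by_cases htB : t ∈ B
      · have htW : t ∉ W := by simp [hW, htB]
        simp [htB, htW, card_erase_zero]; rfl
      · rw [if_neg htB, if_neg htB, one_mul]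
        by_cases htC : t ∈ C
        · have htW : t ∈ W := by simp [hW, ht, htC, htB]
          simp [htC, htW, Finset.card_univ]; rfl
        · have htW : t ∉ W := by simp [hW, htC]
          simp [htC, htW]
  rw [Finset.prod_congr rfl (fun t _ => hpt t), Finset.prod_mul_distrib]
  rw [Finset.prod_ite_mem, Finset.prod_ite_mem, Finset.univ_inter, Finset.univ_inter,
    Finset.prod_const, Finset.prod_const]

/-- divisibility for the `S₂`-sum hyperplane -/
lemma countB (B C S : Finset (Fin n)) (hSB : S ⊆ B) (hBC : B ⊆ C) :
    ((Fintype.card F) ^ ((C \ B).card)) ∣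
      (Finset.univ.filter fun u : Fin n → F =>
        (∀ t ∈ B, u t ≠ 0) ∧ (∀ t, t ∉ C → u t = 0) ∧ ∑ y ∈ S, u y = 0).card := by
  classical
  set q := Fintype.card F
  set T := (Finset.univ.filter fun u : Fin n → F =>
        (∀ t ∈ B, u t ≠ 0) ∧ (∀ t, t ∉ C → u t = 0) ∧ ∑ y ∈ S, u y = 0) with hT
  set π : (Fin n → F) → (Fin n → F) := fun u t => if t ∈ B then u t else 0 with hπ
  rw [Finset.card_eq_sum_card_fiberwise (f := π) (t := T.image π)
    (fun x hx => Finset.mem_image_of_mem π hx)]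
  refine Finset.dvd_sum ?_
  intro a ha
  obtain ⟨u₀, hu₀T, hu₀⟩ := Finset.mem_image.1 ha
  rw [hT, Finset.mem_filter] at hu₀T
  obtain ⟨-, h1, h2, h3⟩ := hu₀T
  have haB : ∀ t ∈ B, a t ≠ 0 := by
    intro t ht
    rw [← hu₀]
    simpa [hπ, ht] using h1 t ht
  have haB' : ∀ t, t ∉ B → a t = 0 := by
    intro t ht
    rw [← hu₀]
    simp [hπ, ht]
  have haS : ∑ y ∈ S, a y = 0 := by
    rw [← h3]
    refine Finset.sum_congr rfl fun y hy => ?_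
    rw [← hu₀]
    simp [hπ, hSB hy]
  have hfib : T.filter (fun u => π u = a)
      = Fintype.piFinset (fun t => if t ∈ B then {a t} else if t ∈ C then Finset.univ
          else ({0} : Finset F)) := by
    ext u
    simp only [Finset.mem_filter, hT, Finset.mem_univ, true_and, Fintype.mem_piFinset]
    constructor
    · rintro ⟨⟨g1, g2, g3⟩, g4⟩ t
      by_cases htB : t ∈ B
      · rw [if_pos htB, Finset.mem_singleton, ← g4]
        simp [hπ, htB]
      · rw [if_neg htB]
        by_cases htC : t ∈ C
        · simp [htC]
        · simp [htC, g2 t htC]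
    · intro h
      have huB : ∀ t ∈ B, u t = a t := by
        intro t ht
        have := h t
        rwa [if_pos ht, Finset.mem_singleton] at this
      have huC : ∀ t, t ∉ C → u t = 0 := by
        intro t ht
        have := h t
        rwa [if_neg (fun htB => ht (hBC htB)), if_neg ht, Finset.mem_singleton] at this
      refine ⟨⟨fun t ht => (huB t ht) ▸ haB t ht, huC, ?_⟩, ?_⟩
      · rw [← haS]
        exact Finset.sum_congr rfl fun y hy => huB y (hSB hy)
      · funext t
        by_cases htB : t ∈ B
        · simp [hπ, htB, huB t htB]
        · simp [hπ, htB, (haB' t htB).symm]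
  rw [hfib, Fintype.card_piFinset]
  have hpt : ∀ t : Fin n,
      ((if t ∈ B then {a t} else if t ∈ C then Finset.univ else ({0} : Finset F)).card)
        = (if t ∈ C \ B then q else 1) := by
    intro t
    by_cases htB : t ∈ B
    · simp [htB]
    · rw [if_neg htB]
      by_cases htC : t ∈ C
      · simp [htB, htC, Finset.card_univ]; rfl
      · simp [htB, htC, fun h => htC (Finset.mem_sdiff.1 h).1]
  rw [Finset.prod_congr rfl (fun t _ => hpt t), Finset.prod_ite_mem, Finset.univ_inter,
    Finset.prod_const]

end Counting

end MWaux
set_option maxHeartbeats 1600000 in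
/-- Theorem 4.1(ii), (b) ⇒ (a): if `E_C` is of MacWilliams type then `P` is hierarchical. -/
theorem stmt_15 {n : ℕ} (hn : 0 < n) (le : Fin n → Fin n → Prop)
    [IsPartialOrder (Fin n) le]
    (F : Type) [Field F] [Fintype F]
    (hMW : IsMacWilliamsType F le (fun A B => A.card = B.card)) :
    IsHierarchical le := by
  classical
  by_contra hnh
  have hbad : ∃ m, MWaux.Bad le m := MWaux.not_hier_bad le hnh
  set k := Nat.find hbad with hkdef
  have hkspec := Nat.find_spec hbad
  have hmin : ∀ r < k, ¬ MWaux.Bad le r := fun r hr => Nat.find_min hbad hr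
  obtain ⟨i, z, hi, hz, hzi⟩ := hkspec
  set J := MWaux.Alev le k with hJdef
  set G := MWaux.Gk le k with hGdef
  have hiJ : i ∉ J := by rw [hJdef, MWaux.mem_Alev_iff]; omega
  have hiG : i ∉ G := by rw [hGdef, MWaux.mem_Gk]; omega
  have hzG : z ∈ G := by rw [hGdef, MWaux.mem_Gk]; exact hz
  have hGJc : G ⊆ Jᶜ := by
    intro y hy
    rw [hGdef, MWaux.mem_Gk] at hy
    rw [Finset.mem_compl, hJdef, MWaux.mem_Alev_iff]
    omega
  have hiJc : i ∈ Jᶜ := Finset.mem_compl.2 hiJ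
  -- J is contained in the downset of i
  obtain ⟨x₁, hx₁i, hx₁⟩ := MWaux.descend le (i := i) (by omega)
  have hJcl : J ⊆ idealCl le {i} := by
    intro x hx
    rw [MWaux.mem_idealCl_singleton]
    have hpx : MWaux.plt le x x₁ := (MWaux.key13 le k hmin (by omega)).2 hx
    exact IsTrans.trans _ _ _ hpx.1 hx₁i.1
  set s := ((idealCl le {i}) \ J).card with hsdef
  have hspos : 0 < s := by
    rw [hsdef]
    exact Finset.card_pos.2 ⟨i, Finset.mem_sdiff.2 ⟨MWaux.self_mem_idealCl_singleton le i, hiJ⟩⟩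
  have hsub : (idealCl le {i}) \ J ⊆ insert i (G.erase z) := by
    intro b hb
    rw [Finset.mem_sdiff, MWaux.mem_idealCl_singleton] at hb
    obtain ⟨hbi, hbJ⟩ := hb
    by_cases hbe : b = i
    · subst hbe; exact Finset.mem_insert_self _ _
    · have hplt : MWaux.plt le b i := ⟨hbi, hbe⟩
      have hmem := MWaux.strict_mem_Alev le hplt
      rw [hi, MWaux.mem_Alev_iff] at hmem
      rw [hJdef, MWaux.mem_Alev_iff] at hbJ
      have hlevb : MWaux.lev le b = k := by omega
      refine Finset.mem_insert_of_mem (Finset.mem_erase.2 ⟨?_, by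
        rw [hGdef, MWaux.mem_Gk]; exact hlevb⟩)
      rintro rfl
      exact hzi hplt
  have hsG : s ≤ G.card := by
    have h1 := Finset.card_le_card hsub
    have h2 := Finset.card_insert_le i (G.erase z)
    have h3 : (G.erase z).card = G.card - 1 := Finset.card_erase_of_mem hzG
    have h4 : 0 < G.card := Finset.card_pos.2 ⟨z, hzG⟩
    omega
  obtain ⟨S₂, hS₂G, hS₂card⟩ := Finset.exists_subset_card_eq hsG
  obtain ⟨x₀, hx₀⟩ : S₂.Nonempty := Finset.card_pos.1 (by omega)
  -- vectors
  set w₁ : Fin n → F := fun t => if t = i then 1 else 0 with hw₁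
  set w₂ : Fin n → F := fun t => if t ∈ S₂ then 1 else 0 with hw₂
  have hsupp₁ : supp w₁ = {i} := by
    ext t
    rw [MWaux.mem_supp, hw₁]
    by_cases ht : t = i <;> simp [ht]
  have hsupp₂ : supp w₂ = S₂ := by
    ext t
    rw [MWaux.mem_supp, hw₂]
    by_cases ht : t ∈ S₂ <;> simp [ht]
  have hlevS₂ : ∀ y ∈ S₂, MWaux.lev le y = k := by
    intro y hy
    have := hS₂G hy
    rwa [hGdef, MWaux.mem_Gk] at this
  have hclS₂ : idealCl le S₂ = J ∪ S₂ := by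
    ext x
    simp only [idealCl, Finset.mem_filter, Finset.mem_univ, true_and, Finset.mem_union]
    constructor
    · rintro ⟨a, haS, hxa⟩
      by_cases hae : x = a
      · exact Or.inr (hae ▸ haS)
      · exact Or.inl ((MWaux.key13 le k hmin (hlevS₂ a haS)).1 ⟨hxa, hae⟩)
    · rintro (hx | hx)
      · exact ⟨x₀, hx₀, ((MWaux.key13 le k hmin (hlevS₂ x₀ hx₀)).2 hx).1⟩
      · exact ⟨x, hx, refl_of le x⟩
  have hdisj : Disjoint J S₂ := by
    rw [Finset.disjoint_right]
    intro y hy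
    rw [hJdef, MWaux.mem_Alev_iff]
    have := hlevS₂ y hy
    omega
  have hcard₂ : (idealCl le S₂).card = J.card + s := by
    rw [hclS₂, Finset.card_union_of_disjoint hdisj, hS₂card]
  have hcard₁ : (idealCl le {i}).card = J.card + s := by
    have := Finset.card_sdiff_add_card_eq_card hJcl
    omega
  -- the two codes
  set C₁ := Submodule.span F ({w₁} : Set (Fin n → F)) with hC₁
  set C₂ := Submodule.span F ({w₂} : Set (Fin n → F)) with hC₂
  have happ₁ : ∀ a : F, (a • w₁) i = a := by
    intro a; rw [MWaux.smul_apply', hw₁]; simp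
  have happ₂ : ∀ a : F, (a • w₂) x₀ = a := by
    intro a; rw [MWaux.smul_apply', hw₂]; simp [hx₀]
  -- AE distributions agree
  have hAE : ∀ I, IsIdeal le I →
      AE le (fun A B => A.card = B.card) C₁ I = AE le (fun A B => A.card = B.card) C₂ I := by
    intro I _
    unfold AE
    refine Finset.card_bij' (fun v _ => v i • w₂) (fun u _ => u x₀ • w₁) ?_ ?_ ?_ ?_
    · intro v hv
      simp only [sphE, Finset.mem_filter, Finset.mem_univ, true_and] at hv ⊢
      obtain ⟨hv1, hv2⟩ := hv
      obtain ⟨a, ha⟩ := Submodule.mem_span_singleton.1 hv2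
      rw [← ha] at hv1 ⊢
      rw [happ₁]
      refine ⟨?_, Submodule.smul_mem _ _ (Submodule.mem_span_singleton_self w₂)⟩
      by_cases haz : a = 0
      · subst haz
        rw [zero_smul] at hv1 ⊢
        exact hv1
      · rw [MWaux.supp_smul haz] at hv1 ⊢
        rw [hsupp₁, hcard₁] at hv1
        rw [hsupp₂, hcard₂]
        exact hv1
    · intro u hu
      simp only [sphE, Finset.mem_filter, Finset.mem_univ, true_and] at hu ⊢
      obtain ⟨hu1, hu2⟩ := hu
      obtain ⟨a, ha⟩ := Submodule.mem_span_singleton.1 hu2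
      rw [← ha] at hu1 ⊢
      rw [happ₂]
      refine ⟨?_, Submodule.smul_mem _ _ (Submodule.mem_span_singleton_self w₁)⟩
      by_cases haz : a = 0
      · subst haz
        rw [zero_smul] at hu1 ⊢
        exact hu1
      · rw [MWaux.supp_smul haz] at hu1 ⊢
        rw [hsupp₂, hcard₂] at hu1
        rw [hsupp₁, hcard₁]
        exact hu1
    · intro v hv
      simp only [sphE, Finset.mem_filter, Finset.mem_univ, true_and] at hv
      obtain ⟨a, ha⟩ := Submodule.mem_span_singleton.1 hv.2
      show ((v i • w₂) x₀) • w₁ = v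
      rw [happ₂, ← ha, happ₁]
    · intro u hu
      simp only [sphE, Finset.mem_filter, Finset.mem_univ, true_and] at hu
      obtain ⟨a, ha⟩ := Submodule.mem_span_singleton.1 hu.2
      show ((u x₀ • w₁) i) • w₂ = u
      rw [happ₁, ← ha, happ₂]
  -- apply MacWilliams hypothesis at the ideal J
  have hAED := hMW C₁ C₂ hAE J (MWaux.Alev_isIdeal le k)
  -- rewrite both AED's as explicit counts
  have hAED_T : ∀ w : Fin n → F,
      AED le (fun A B => A.card = B.card) (dualCode (Submodule.span F {w})) J
        = (Finset.univ.filter fun u : Fin n → F =>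
            (∀ t ∈ G, u t ≠ 0) ∧ (∀ t, t ∉ Jᶜ → u t = 0) ∧ dot u w = 0).card := by
    intro w
    unfold AED
    congr 1
    ext u
    simp only [sphED, Finset.mem_filter, Finset.mem_univ, true_and]
    constructor
    · rintro ⟨⟨K, hKid, hKcard, hKcl⟩, hdual⟩
      have hKJ : K = J := MWaux.unique_ideal le k hmin hKid hKcard
      subst hKJ
      have h6 := (MWaux.F6 le k hmin (supp u)).1 hKcl
      refine ⟨fun t ht => MWaux.mem_supp.1 (h6.1 ht), ?_, ?_⟩
      · intro t ht
        by_contra hut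
        exact ht (h6.2 (MWaux.mem_supp.2 hut))
      · exact MWaux.mem_dual_span.1 hdual
    · rintro ⟨h1, h2, h3⟩
      refine ⟨⟨J, MWaux.Alev_isIdeal le k, rfl, (MWaux.F6 le k hmin (supp u)).2 ⟨?_, ?_⟩⟩,
        MWaux.mem_dual_span.2 h3⟩
      · intro t ht
        rw [MWaux.mem_supp]
        exact h1 t ht
      · intro t ht
        by_contra htJ
        exact MWaux.mem_supp.1 ht (h2 t htJ)
  -- compute the two counts
  have hdot₁ : ∀ u : Fin n → F, dot u w₁ = u i := by
    intro u
    rw [dot, hw₁]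
    simp [mul_ite]
  have hdot₂ : ∀ u : Fin n → F, dot u w₂ = ∑ y ∈ S₂, u y := by
    intro u
    rw [dot, hw₂]
    simp [mul_ite]
  set q := Fintype.card F with hq
  have hq2 : 2 ≤ q := Fintype.one_lt_card
  set d := (Jᶜ \ G).card with hd
  have hid : i ∈ Jᶜ \ G := Finset.mem_sdiff.2 ⟨hiJc, hiG⟩
  have hdpos : 0 < d := by rw [hd]; exact Finset.card_pos.2 ⟨i, hid⟩
  have hd1 : ((Jᶜ \ G).erase i).card = d - 1 := by
    rw [hd]; exact Finset.card_erase_of_mem hid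
  have hcount₁ : AED le (fun A B => A.card = B.card) (dualCode C₁) J
      = (q - 1) ^ G.card * q ^ (d - 1) := by
    rw [hC₁, hAED_T w₁]
    have := MWaux.countA (F := F) G Jᶜ i hiG hiJc hGJc
    rw [← hd1, ← this]
    congr 1
    ext u
    simp only [Finset.mem_filter, Finset.mem_univ, true_and]
    rw [hdot₁]
  have hcount₂ : q ^ d ∣ AED le (fun A B => A.card = B.card) (dualCode C₂) J := by
    rw [hC₂, hAED_T w₂]
    have := MWaux.countB (F := F) G Jᶜ S₂ hS₂G hGJc
    rw [← hd] at this
    convert this using 2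
    ext u
    simp only [Finset.mem_filter, Finset.mem_univ, true_and]
    rw [hdot₂]
  -- contradiction
  rw [hAED] at hcount₁
  rw [hcount₁] at hcount₂
  have hdd : q ^ d = q ^ (d - 1) * q := by
    rw [← pow_succ]
    congr 1
    omega
  have hqdvd : q ∣ (q - 1) ^ G.card := by
    have h5 : q ^ (d - 1) * q ∣ q ^ (d - 1) * (q - 1) ^ G.card := by
      rw [← hdd, mul_comm (q ^ (d-1)) _]
      exact hcount₂
    exact (Nat.mul_dvd_mul_iff_left (Nat.pow_pos (by omega))).1 h5
  have hco : Nat.Coprime q (q - 1) := by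
    have hq1 : q = 1 + (q - 1) := by omega
    nth_rewrite 1 [hq1]
    rw [Nat.coprime_add_self_left]
    exact Nat.coprime_one_left _
  have : q = 1 := Nat.Coprime.eq_one_of_dvd (Nat.Coprime.pow_right G.card hco) hqdvd
  omega
end
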